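/- Let K be a field of characteristic zero. Let φ = σ(1, α, f) and ψ = σ(2, β, g) be elementary automorphisms of P_n = K[x_1,…,x_n], where f does not involve x_1, and g is a constant, g ∈ K. Then the subgroup ⟨φ, ψ⟩ is metabelian, i.e. its second derived subgroup is trivial. -/

import Mathlib

open MvPolynomial

noncomputable section

/-- The group of `K`-algebra automorphisms of the polynomial algebra `P_n = K[x_1,…,x_n]`. -/
abbrev PAut (K : Type*) [Field K] (n : ℕ) :=
  MvPolynomial (Fin n) K ≃ₐ[K] MvPolynomial (Fin n) K

namespace Bardakov

variable {K : Type*} [Field K] {n : ℕ}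

lemma paut_ext {θ₁ θ₂ : PAut K n} (h : ∀ i, θ₁ (X i) = θ₂ (X i)) : θ₁ = θ₂ :=
  AlgEquiv.coe_algHom_injective (MvPolynomial.algHom_ext h)

lemma inv_apply_eq {θ : PAut K n} {x y : MvPolynomial (Fin n) K} (h : θ y = x) :
    θ⁻¹ x = y := by
  subst h; exact θ.symm_apply_apply y

lemma map_C' (θ : PAut K n) (a : K) : θ (C a) = C a := by
  have := θ.commutes a
  simpa [MvPolynomial.algebraMap_eq] using this

variable (i0 : Fin n)

/-- Polynomials not involving `X i0`. -/
def A : Subalgebra K (MvPolynomial (Fin n) K) :=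
  Algebra.adjoin K (X '' {j : Fin n | j ≠ i0})

lemma X_mem_A {j : Fin n} (hj : j ≠ i0) : (X j : MvPolynomial (Fin n) K) ∈ A i0 :=
  Algebra.subset_adjoin ⟨j, hj, rfl⟩

lemma C_mem_A (a : K) : (C a : MvPolynomial (Fin n) K) ∈ A i0 := by
  have := (A i0).algebraMap_mem a
  simpa [MvPolynomial.algebraMap_eq] using this

lemma fix_A {θ : PAut K n} (h : ∀ j, j ≠ i0 → θ (X j) = X j)
    {p : MvPolynomial (Fin n) K} (hp : p ∈ A i0) : θ p = p := by
  induction hp using Algebra.adjoin_induction with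
  | mem x hx => obtain ⟨j, hj, rfl⟩ := hx; exact h j hj
  | algebraMap r => exact θ.commutes r
  | add x y hx hy ihx ihy => rw [map_add, ihx, ihy]
  | mul x y hx hy ihx ihy => rw [map_mul, ihx, ihy]

lemma map_A {θ : PAut K n} (h : ∀ j, j ≠ i0 → θ (X j) ∈ A i0)
    {p : MvPolynomial (Fin n) K} (hp : p ∈ A i0) : θ p ∈ A i0 := by
  induction hp using Algebra.adjoin_induction with
  | mem x hx => obtain ⟨j, hj, rfl⟩ := hx; exact h j hj
  | algebraMap r => rw [θ.commutes r]; exact (A i0).algebraMap_mem r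
  | add x y hx hy ihx ihy => rw [map_add]; exact add_mem ihx ihy
  | mul x y hx hy ihx ihy => rw [map_mul]; exact mul_mem ihx ihy

/-- The abelian group of automorphisms fixing all variables except `X i0`,
which they translate by an element of `A i0`. -/
def T : Subgroup (PAut K n) where
  carrier := {θ | (∀ j, j ≠ i0 → θ (X j) = X j) ∧
      ∃ p ∈ A i0, θ (X i0) = X i0 + p}
  one_mem' := ⟨fun _ _ => rfl, 0, zero_mem _, by simp⟩
  mul_mem' := by
    rintro θ₁ θ₂ ⟨h₁, p₁, hp₁, e₁⟩ ⟨h₂, p₂, hp₂, e₂⟩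
    refine ⟨fun j hj => by simp only [AlgEquiv.mul_apply, h₂ j hj, h₁ j hj],
      p₁ + θ₁ p₂, ?_, ?_⟩
    · exact add_mem hp₁ (map_A i0 (fun j hj => by
        rw [h₁ j hj]; exact X_mem_A i0 hj) hp₂)
    · rw [AlgEquiv.mul_apply, e₂, map_add, e₁, add_assoc]
  inv_mem' := by
    rintro θ ⟨h, p, hp, e⟩
    have hfix : ∀ j, j ≠ i0 → θ⁻¹ (X j) = X j := fun j hj => inv_apply_eq (h j hj)
    refine ⟨hfix, -p, neg_mem hp, inv_apply_eq ?_⟩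
    rw [map_add, e, map_neg, fix_A i0 h hp, add_assoc, add_neg_cancel, add_zero]

lemma T_comm {θ₁ θ₂ : PAut K n} (h₁ : θ₁ ∈ T i0) (h₂ : θ₂ ∈ T i0) :
    θ₁ * θ₂ = θ₂ * θ₁ := by
  obtain ⟨f₁, p₁, hp₁, e₁⟩ := h₁
  obtain ⟨f₂, p₂, hp₂, e₂⟩ := h₂
  refine paut_ext fun j => ?_
  by_cases hj : j = i0
  · have hL : θ₁ (θ₂ (X i0)) = X i0 + p₁ + p₂ := by
      rw [e₂, map_add, e₁, fix_A i0 f₁ hp₂]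
    have hR : θ₂ (θ₁ (X i0)) = X i0 + p₂ + p₁ := by
      rw [e₁, map_add, e₂, fix_A i0 f₂ hp₁]
    subst hj
    simp only [AlgEquiv.mul_apply, hL, hR]
    ring
  · simp only [AlgEquiv.mul_apply, f₁ j hj, f₂ j hj]

variable (i1 : Fin n) (ψ : PAut K n)

/-- Automorphisms acting as an affine map on `X i1` and fixing other variables. -/
def W : Subgroup (PAut K n) where
  carrier := {θ | (∀ j, j ≠ i1 → θ (X j) = X j) ∧
      ∃ b d : K, b ≠ 0 ∧ θ (X i1) = C b * X i1 + C d}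
  one_mem' := ⟨fun _ _ => rfl, 1, 0, one_ne_zero, by simp⟩
  mul_mem' := by
    rintro θ₁ θ₂ ⟨h₁, b₁, d₁, hb₁, e₁⟩ ⟨h₂, b₂, d₂, hb₂, e₂⟩
    refine ⟨fun j hj => by rw [AlgEquiv.mul_apply, h₂ j hj, h₁ j hj],
      b₂ * b₁, b₂ * d₁ + d₂, mul_ne_zero hb₂ hb₁, ?_⟩
    rw [AlgEquiv.mul_apply, e₂, map_add, map_mul, map_C', map_C', e₁, C_mul, C_add, C_mul]
    ring
  inv_mem' := by
    rintro θ ⟨h, b, d, hb, e⟩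
    refine ⟨fun j hj => inv_apply_eq (h j hj), b⁻¹, -(b⁻¹ * d), inv_ne_zero hb,
      inv_apply_eq ?_⟩
    have hbb : (C b⁻¹ : MvPolynomial (Fin n) K) * C b = 1 := by
      rw [← C_mul, inv_mul_cancel₀ hb, C_1]
    rw [map_add, map_mul, map_C', map_C', e, mul_add, ← mul_assoc, hbb, one_mul,
      C_neg, C_mul]
    ring

/-- Explicit description of the elements of the group generated by `φ` and `ψ`. -/
def Elem (θ : PAut K n) (a : K) (p : MvPolynomial (Fin n) K) (k : ℤ) : Prop :=
  (∀ j, j ≠ i0 → j ≠ i1 → θ (X j) = X j) ∧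
    θ (X i1) = (ψ ^ k) (X i1) ∧ a ≠ 0 ∧ p ∈ A i0 ∧
    θ (X i0) = C a * X i0 + p

variable {i0 i1 ψ}

lemma Elem.fix_ne_i0 (hne : i0 ≠ i1) (hψ : ψ ∈ W i1) {θ a p k} (h : Elem i0 i1 ψ θ a p k) :
    ∀ j, j ≠ i0 → θ (X j) ∈ A i0 := by
  intro j hj
  by_cases hj1 : j = i1
  · obtain ⟨-, b, d, -, e⟩ := (W i1).zpow_mem hψ k
    rw [hj1, h.2.1, e]
    exact add_mem (mul_mem (C_mem_A i0 b) (X_mem_A i0 (Ne.symm hne))) (C_mem_A i0 d)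
  · rw [h.1 j hj hj1]; exact X_mem_A i0 hj

lemma Elem.mul (hne : i0 ≠ i1) (hψ : ψ ∈ W i1) {θ₁ θ₂ a₁ a₂ p₁ p₂ k₁ k₂}
    (h₁ : Elem i0 i1 ψ θ₁ a₁ p₁ k₁) (h₂ : Elem i0 i1 ψ θ₂ a₂ p₂ k₂) :
    Elem i0 i1 ψ (θ₁ * θ₂) (a₁ * a₂) (C a₂ * p₁ + θ₁ p₂) (k₁ + k₂) := by
  obtain ⟨f₁, e₁, ha₁, hp₁, g₁⟩ := h₁
  obtain ⟨f₂, e₂, ha₂, hp₂, g₂⟩ := h₂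
  refine ⟨fun j hj hj1 => by rw [AlgEquiv.mul_apply, f₂ j hj hj1, f₁ j hj hj1], ?_, ?_, ?_, ?_⟩
  · obtain ⟨-, b, d, -, e⟩ := (W i1).zpow_mem hψ k₂
    rw [AlgEquiv.mul_apply, e₂, e, map_add, map_mul, map_C', map_C', e₁]
    have : (ψ ^ (k₁ + k₂)) (X i1) = (ψ ^ k₁) ((ψ ^ k₂) (X i1)) := by
      rw [zpow_add]; rfl
    rw [this, e, map_add, map_mul, map_C', map_C']
  · exact mul_ne_zero ha₁ ha₂
  · exact add_mem (mul_mem (C_mem_A i0 a₂) hp₁) (map_A i0 (Elem.fix_ne_i0 hne hψ ⟨f₁, e₁, ha₁, hp₁, g₁⟩) hp₂)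
  · rw [AlgEquiv.mul_apply, g₂, map_add, map_mul, map_C', g₁, C_mul]
    ring

lemma Elem.inv (hne : i0 ≠ i1) (hψ : ψ ∈ W i1) {θ a p k}
    (h : Elem i0 i1 ψ θ a p k) :
    Elem i0 i1 ψ θ⁻¹ a⁻¹ (-(C a⁻¹ * θ⁻¹ p)) (-k) := by
  obtain ⟨f, e, ha, hp, g⟩ := h
  have hfix : ∀ j, j ≠ i0 → j ≠ i1 → θ⁻¹ (X j) = X j :=
    fun j hj hj1 => inv_apply_eq (f j hj hj1)
  have hi1 : θ⁻¹ (X i1) = (ψ ^ (-k)) (X i1) := by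
    refine inv_apply_eq ?_
    obtain ⟨-, b, d, -, e'⟩ := (W i1).zpow_mem hψ (-k)
    rw [e', map_add, map_mul, map_C', map_C', e]
    have : C b * (ψ ^ k) (X i1) + C d = (ψ ^ k) (C b * X i1 + C d) := by
      rw [map_add, map_mul, map_C', map_C']
    rw [this, ← e', ← AlgEquiv.mul_apply, ← zpow_add, add_neg_cancel, zpow_zero,
      AlgEquiv.one_apply]
  have hinvA : θ⁻¹ p ∈ A i0 := by
    refine map_A i0 ?_ hp
    intro j hj
    by_cases hj1 : j = i1
    · obtain ⟨-, b, d, -, e'⟩ := (W i1).zpow_mem hψ (-k)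
      rw [hj1, hi1, e']
      exact add_mem (mul_mem (C_mem_A i0 b) (X_mem_A i0 (Ne.symm hne))) (C_mem_A i0 d)
    · rw [hfix j hj hj1]; exact X_mem_A i0 hj
  refine ⟨hfix, hi1, inv_ne_zero ha, neg_mem (mul_mem (C_mem_A i0 a⁻¹) hinvA),
    inv_apply_eq ?_⟩
  have hθp : θ (θ⁻¹ p) = p := θ.apply_symm_apply p
  have haa : (C a⁻¹ : MvPolynomial (Fin n) K) * C a = 1 := by
    rw [← C_mul, inv_mul_cancel₀ ha, C_1]
  rw [map_add, map_mul, map_C', g, map_neg, map_mul, map_C', hθp, mul_add,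
    ← mul_assoc, haa, one_mul]
  ring

end Bardakov

open Bardakov

/-- **Statement 15 (Proposition 3).** Let `φ = σ(1, α, f)` and `ψ = σ(2, β, g)` be
elementary automorphisms of `P_n`, where `f` does not involve `x_1` and `g = c ∈ K` is a
constant.  Then `⟨φ, ψ⟩` is metabelian: its second derived subgroup is trivial. -/
theorem bardakov_proposition3 (K : Type*) [Field K] [CharZero K]
    (n : ℕ) (hn : 2 ≤ n)
    (α β : K) (hα : α ≠ 0) (hβ : β ≠ 0) (f : MvPolynomial (Fin n) K) (c : K)
    (hf : f ∈ Algebra.adjoin K (MvPolynomial.X '' {j : Fin n | j ≠ ⟨0, by omega⟩}))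
    (φ ψ : PAut K n)
    (hφ1 : φ (X ⟨0, by omega⟩) = C α * X ⟨0, by omega⟩ + f)
    (hφ2 : ∀ j : Fin n, j ≠ ⟨0, by omega⟩ → φ (X j) = X j)
    (hψ1 : ψ (X ⟨1, by omega⟩) = C β * X ⟨1, by omega⟩ + C c)
    (hψ2 : ∀ j : Fin n, j ≠ ⟨1, by omega⟩ → ψ (X j) = X j) :
    derivedSeries (Subgroup.closure {φ, ψ}) 2 = ⊥ := by
  set i0 : Fin n := ⟨0, by omega⟩ with hi0def
  set i1 : Fin n := ⟨1, by omega⟩ with hi1def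
  have hne : i0 ≠ i1 := by simp [hi0def, hi1def, Fin.ext_iff]
  have hψW : ψ ∈ W i1 := ⟨hψ2, β, c, hβ, hψ1⟩
  set G : Subgroup (PAut K n) := Subgroup.closure {φ, ψ} with hG
  -- every element of G has an Elem description
  have hGE : ∀ g ∈ G, ∃ a p k, Elem i0 i1 ψ g a p k := by
    intro g hg
    induction hg using Subgroup.closure_induction with
    | mem x hx =>
      rcases hx with hx | hx
      · subst hx
        exact ⟨α, f, 0, fun j hj _ => hφ2 j hj, by rw [hφ2 i1 (Ne.symm hne)]; simp,
          hα, hf, hφ1⟩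
      · subst hx
        refine ⟨1, 0, 1, fun j _ hj1 => hψ2 j hj1, by simp, one_ne_zero, zero_mem _, ?_⟩
        rw [hψ2 i0 hne]; simp
    | one => exact ⟨1, 0, 0, fun _ _ _ => rfl, by simp, one_ne_zero, zero_mem _, by simp⟩
    | mul x y hx hy ihx ihy =>
      obtain ⟨a₁, p₁, k₁, h₁⟩ := ihx
      obtain ⟨a₂, p₂, k₂, h₂⟩ := ihy
      exact ⟨_, _, _, h₁.mul hne hψW h₂⟩
    | inv x hx ihx =>
      obtain ⟨a, p, k, h⟩ := ihx
      exact ⟨_, _, _, h.inv hne hψW⟩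
  -- commutators of elements of G lie in T i0
  open scoped commutatorElement in
  have hcomm : ∀ g ∈ G, ∀ h ∈ G, ⁅g, h⁆ ∈ T i0 := by
    intro g hg h hh
    obtain ⟨a₁, p₁, k₁, h₁⟩ := hGE g hg
    obtain ⟨a₂, p₂, k₂, h₂⟩ := hGE h hh
    have hE := ((h₁.mul hne hψW h₂).mul hne hψW (h₁.inv hne hψW)).mul hne hψW
      (h₂.inv hne hψW)
    obtain ⟨hfix, he1, -, hpA, he0⟩ := hE
    have ha : a₁ * a₂ * a₁⁻¹ * a₂⁻¹ = 1 := by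
      have ha₁ := h₁.2.2.1
      have ha₂ := h₂.2.2.1
      field_simp
    have hk : k₁ + k₂ + -k₁ + -k₂ = 0 := by ring
    rw [commutatorElement_def]
    refine ⟨?_, ?_⟩
    · intro j hj
      by_cases hj1 : j = i1
      · subst hj1
        rw [he1, hk, zpow_zero, AlgEquiv.one_apply]
      · exact hfix j hj hj1
    · refine ⟨_, hpA, ?_⟩
      rw [he0, ha]
      simp
  -- finish
  have hD1 : ∀ x : G, x ∈ derivedSeries G 1 → (x : PAut K n) ∈ T i0 := by
    intro x hx
    have : (x : PAut K n) ∈ (derivedSeries G 1).map G.subtype :=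
      Subgroup.mem_map_of_mem _ hx
    rw [derivedSeries_one, _root_.commutator, Subgroup.map_commutator] at this
    have htop : (⊤ : Subgroup G).map G.subtype = G := by
      rw [← MonoidHom.range_eq_map, Subgroup.range_subtype]
    rw [htop] at this
    have hle : ⁅G, G⁆ ≤ T i0 := Subgroup.commutator_le.2 hcomm
    exact hle this
  show derivedSeries G 2 = ⊥
  rw [show (2 : ℕ) = 1 + 1 from rfl, derivedSeries_succ, eq_bot_iff]
  rw [Subgroup.commutator_le]
  intro x hx y hy
  rw [Subgroup.mem_bot, commutatorElement_eq_one_iff_mul_comm]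
  have := T_comm i0 (hD1 x hx) (hD1 y hy)
  exact Subtype.ext this
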